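/- arXiv:1906.05661 — 6 statements merged into one kernel-verified Lean document; each statement's English description precedes it below -/
import Mathlib

section
/- Let ℓ: R^p → R be a function, w_t ∈ R^p, η > 0, d = ∇ℓ(w_t) and l = ℓ(w_t) ≥ 0. Then the point w_{t+1} = w_t - min{l/‖d‖², η}·d (interpreted as w_t when d = 0) is the unique minimizer over w ∈ R^p of (1/(2η))‖w - w_t‖² + max{l + dᵀ(w - w_t), 0}. -/
open RealInnerProductSpace

lemma alig_key (η γ A t : ℝ) (hη : 0 < η) (hγ0 : 0 ≤ γ) (hγη : γ ≤ η)
    (hA : 0 ≤ A) (hc : γ = η ∨ A = 0 ∨ t = 0) :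
    γ * t / η ≤ max (A + t) 0 - A := by
  rcases le_or_gt 0 t with ht | ht
  · rw [max_eq_left (by linarith), div_le_iff₀ hη]
    nlinarith
  · rcases hc with h | h | h
    · subst h
      rw [mul_comm, mul_div_assoc, div_self hη.ne', mul_one]
      have := le_max_left (A + t) (0 : ℝ)
      linarith
    · subst h
      rw [zero_add, max_eq_right ht.le, div_le_iff₀ hη]
      nlinarith
    · subst h
      simp [max_eq_left hA]

lemma alig_aux {p : ℕ} (wt d : EuclideanSpace ℝ (Fin p)) (l η γ : ℝ) (hη : 0 < η)
    (hγ0 : 0 ≤ γ) (hγη : γ ≤ η) (hγl : γ * ‖d‖ ^ 2 ≤ l)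
    (hc : γ = η ∨ l - γ * ‖d‖ ^ 2 = 0 ∨ d = 0) (w : EuclideanSpace ℝ (Fin p)) :
    (1 / (2 * η)) * ‖(wt - γ • d) - wt‖ ^ 2 + max (l + ⟪d, (wt - γ • d) - wt⟫) 0
      + (1 / (2 * η)) * ‖w - (wt - γ • d)‖ ^ 2
    ≤ (1 / (2 * η)) * ‖w - wt‖ ^ 2 + max (l + ⟪d, w - wt⟫) 0 := by
  set u := w - (wt - γ • d) with hu
  have h1 : (wt - γ • d) - wt = -(γ • d) := by abel
  have h2 : w - wt = u - γ • d := by rw [hu]; abel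
  rw [h1, h2]
  have hnd : ‖-(γ • d)‖ ^ 2 = γ ^ 2 * ‖d‖ ^ 2 := by
    rw [norm_neg, norm_smul, mul_pow, Real.norm_eq_abs, sq_abs]
  have hid : ⟪d, -(γ • d)⟫ = -(γ * ‖d‖ ^ 2) := by
    rw [inner_neg_right, real_inner_smul_right, real_inner_self_eq_norm_sq]
  have hn2 : ‖u - γ • d‖ ^ 2 = ‖u‖ ^ 2 - 2 * γ * ⟪d, u⟫ + γ ^ 2 * ‖d‖ ^ 2 := by
    rw [norm_sub_sq_real, real_inner_smul_right, norm_smul, mul_pow,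
      Real.norm_eq_abs, sq_abs, real_inner_comm]
    ring
  have hi2 : ⟪d, u - γ • d⟫ = ⟪d, u⟫ - γ * ‖d‖ ^ 2 := by
    rw [inner_sub_right, real_inner_smul_right, real_inner_self_eq_norm_sq]
  rw [hnd, hid, hn2, hi2, max_eq_left (by linarith)]
  have hc' : γ = η ∨ l - γ * ‖d‖ ^ 2 = 0 ∨ ⟪d, u⟫ = 0 := by
    rcases hc with h | h | h
    · exact Or.inl h
    · exact Or.inr (Or.inl h)
    · exact Or.inr (Or.inr (by simp [h]))
  have key := alig_key η γ (l - γ * ‖d‖ ^ 2) ⟪d, u⟫ hη hγ0 hγη (by linarith) hc'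
  have harr : l + (⟪d, u⟫ - γ * ‖d‖ ^ 2) = (l - γ * ‖d‖ ^ 2) + ⟪d, u⟫ := by ring
  rw [harr]
  have hrw : (1 / (2 * η)) * (‖u‖ ^ 2 - 2 * γ * ⟪d, u⟫ + γ ^ 2 * ‖d‖ ^ 2)
      = (1 / (2 * η)) * ‖u‖ ^ 2 - γ * ⟪d, u⟫ / η + (1 / (2 * η)) * (γ ^ 2 * ‖d‖ ^ 2) := by
    field_simp
  rw [hrw]
  linarith

/-- Proximal interpretation of the ALI-G update: with `d = ∇ℓ(wt)`, `l = ℓ(wt) ≥ 0`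
and maximal learning-rate `η > 0`, the point `wt - min{l/‖d‖², η} • d` is the unique
minimizer of `w ↦ (1/(2η))‖w - wt‖² + max{l + ⟪d, w - wt⟫, 0}`. -/
theorem alig_proximal_interpretation
    {p : ℕ} (ℓ : EuclideanSpace ℝ (Fin p) → ℝ)
    (wt d : EuclideanSpace ℝ (Fin p)) (l η : ℝ)
    (hη : 0 < η) (hd : HasGradientAt ℓ d wt) (hl : l = ℓ wt) (hl0 : 0 ≤ l) :
    let wnext := wt - (min (l / ‖d‖ ^ 2) η) • d
    let obj : EuclideanSpace ℝ (Fin p) → ℝ :=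
      fun w => (1 / (2 * η)) * ‖w - wt‖ ^ 2 + max (l + ⟪d, w - wt⟫) 0
    (∀ w, obj wnext ≤ obj w) ∧ ∀ w, obj w = obj wnext → w = wnext := by
  intro wnext obj
  have hγ0 : 0 ≤ min (l / ‖d‖ ^ 2) η := le_min (by positivity) hη.le
  have hγη : min (l / ‖d‖ ^ 2) η ≤ η := min_le_right _ _
  have hγl : min (l / ‖d‖ ^ 2) η * ‖d‖ ^ 2 ≤ l := by
    rcases eq_or_ne (‖d‖ ^ 2) 0 with h | h
    · simpa [h] using hl0
    · calc min (l / ‖d‖ ^ 2) η * ‖d‖ ^ 2 ≤ (l / ‖d‖ ^ 2) * ‖d‖ ^ 2 :=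
            mul_le_mul_of_nonneg_right (min_le_left _ _) (by positivity)
        _ = l := div_mul_cancel₀ _ h
  have hc : min (l / ‖d‖ ^ 2) η = η ∨ l - min (l / ‖d‖ ^ 2) η * ‖d‖ ^ 2 = 0 ∨ d = 0 := by
    rcases min_cases (l / ‖d‖ ^ 2) η with ⟨h1, h2⟩ | ⟨h1, h2⟩
    · rcases eq_or_ne d 0 with hd0 | hd0
      · exact Or.inr (Or.inr hd0)
      · refine Or.inr (Or.inl ?_)
        rw [h1, div_mul_cancel₀, sub_self]
        exact pow_ne_zero 2 (norm_ne_zero_iff.mpr hd0)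
    · exact Or.inl h1
  have aux := alig_aux wt d l η (min (l / ‖d‖ ^ 2) η) hη hγ0 hγη hγl hc
  constructor
  · intro w
    have h := aux w
    have hn : 0 ≤ (1 / (2 * η)) * ‖w - (wt - min (l / ‖d‖ ^ 2) η • d)‖ ^ 2 := by positivity
    exact le_trans (le_add_of_nonneg_right hn) h
  · intro w hw
    have h : obj wnext + (1 / (2 * η)) * ‖w - wnext‖ ^ 2 ≤ obj w := aux w
    rw [hw] at h
    have hpos : 0 < 1 / (2 * η) := by positivity
    have hx : (1 / (2 * η)) * ‖w - wnext‖ ^ 2 ≤ 0 := by linarith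
    have hn : ‖w - wnext‖ ^ 2 ≤ 0 := by nlinarith [hx, hpos]
    have : ‖w - wnext‖ = 0 := by nlinarith [norm_nonneg (w - wnext)]
    exact sub_eq_zero.mp (norm_eq_zero.mp this)
end

section
/- Let ℓ: R^p → R be α-strongly convex, non-negative, with inf ℓ ≤ ε, and let δ ≥ 2αε. Then for all w ∈ R^p, ℓ(w)/(‖∇ℓ(w)‖² + δ) ≤ 1/(2α). -/
open RealInnerProductSpace

/-- Upper bound on the ALI-G step-size for α-strongly convex non-negative losses
with interpolation tolerance ε: `ℓ(w)/(‖∇ℓ(w)‖² + δ) ≤ 1/(2α)` when `δ ≥ 2αε`. -/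
theorem strongly_convex_stepsize_upper_bound
    {p : ℕ} (ℓ : EuclideanSpace ℝ (Fin p) → ℝ)
    (g : EuclideanSpace ℝ (Fin p) → EuclideanSpace ℝ (Fin p))
    (α ε δ : ℝ) (hα : 0 < α) (hε : 0 ≤ ε)
    (hgrad : ∀ w, HasGradientAt ℓ (g w) w)
    (hstrong : ∀ u w, ℓ u ≥ ℓ w + ⟪g w, u - w⟫ + (α / 2) * ‖u - w‖ ^ 2)
    (hnonneg : ∀ w, 0 ≤ ℓ w)
    (hinf : sInf (Set.range ℓ) ≤ ε)
    (hδ : 2 * α * ε ≤ δ) :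
    ∀ w, ℓ w / (‖g w‖ ^ 2 + δ) ≤ 1 / (2 * α) := by
  intro w
  have hPL : ℓ w - ‖g w‖ ^ 2 / (2 * α) ≤ sInf (Set.range ℓ) := by
    apply le_csInf (Set.range_nonempty ℓ)
    rintro _ ⟨u, rfl⟩
    have h := hstrong u w
    have hin : -(‖g w‖ * ‖u - w‖) ≤ ⟪g w, u - w⟫ := by
      have := abs_real_inner_le_norm (g w) (u - w)
      linarith [neg_abs_le ⟪g w, u - w⟫]
    have hsq : (0:ℝ) ≤ (α * ‖u - w‖ - ‖g w‖) ^ 2 := sq_nonneg _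
    rw [ge_iff_le] at h
    have key : ‖g w‖ ^ 2 / (2 * α) * (2 * α) = ‖g w‖ ^ 2 := by field_simp
    nlinarith [h, hin, hsq, key]
  have hup : ℓ w ≤ ‖g w‖ ^ 2 / (2 * α) + ε := by linarith
  have hd0 : 0 ≤ ‖g w‖ ^ 2 + δ := by nlinarith [sq_nonneg ‖g w‖, mul_nonneg (mul_nonneg (by norm_num : (0:ℝ) ≤ 2) hα.le) hε]
  rcases eq_or_lt_of_le hd0 with h0 | hpos
  · rw [← h0, div_zero]
    positivity
  · rw [div_le_div_iff₀ hpos (by positivity)]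
    have : ‖g w‖ ^ 2 / (2 * α) * (2 * α) = ‖g w‖ ^ 2 := by field_simp
    nlinarith [hup]
end

section
/- Let f(w) = w² - |w|³ on [-3/5, 3/5], which has minimum value 0 at w = 0. Starting from w₀ = -3/5, one step of gradient descent with the Polyak step-size, w₁ = w₀ - (f(w₀)/f'(w₀)²)·f'(w₀), yields w₁ = 3/5. By symmetry of f, the iterates oscillate between -3/5 and 3/5 indefinitely. -/
/-- Oscillation of the Polyak step-size on the non-convex function
`f(w) = w² - |w|³` with derivative `f'(w) = 2w - 3·sign(w)·w²` and minimum
value `f⋆ = 0`: starting from `w₀ = -3/5`, the iterates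
`w_{n+1} = w_n - (f(w_n)/f'(w_n)²)·f'(w_n)` oscillate between `-3/5` and `3/5`. -/
theorem polyak_oscillation
    (f : ℝ → ℝ) (hf : ∀ w, f w = w ^ 2 - |w| ^ 3)
    (f' : ℝ → ℝ) (hf' : ∀ w, f' w = 2 * w - 3 * (if 0 ≤ w then (1 : ℝ) else -1) * w ^ 2)
    (u : ℕ → ℝ) (h0 : u 0 = -(3 : ℝ) / 5)
    (hrec : ∀ n, u (n + 1) = u n - (f (u n) / (f' (u n)) ^ 2) * f' (u n)) :
    ∀ n, u n = if Even n then -(3 : ℝ) / 5 else 3 / 5 := by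
  have hstepm : ∀ n, u n = -(3:ℝ)/5 → u (n+1) = 3/5 := by
    intro n h
    rw [hrec, h, hf, hf']
    rw [if_neg (by norm_num)]
    rw [show |(-(3:ℝ)/5)| = 3/5 by rw [abs_of_nonpos (by norm_num)]; ring]
    norm_num
  have hstepp : ∀ n, u n = (3:ℝ)/5 → u (n+1) = -(3:ℝ)/5 := by
    intro n h
    rw [hrec, h, hf, hf']
    rw [if_pos (by norm_num)]
    rw [show |((3:ℝ)/5)| = 3/5 by rw [abs_of_nonneg (by norm_num)]]
    norm_num
  intro n
  induction n with
  | zero => simpa using h0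
  | succ k ih =>
    rcases Nat.even_or_odd k with he | ho
    · rw [if_pos he] at ih
      rw [if_neg (by simpa [Nat.even_add_one] using he)]
      exact hstepm k ih
    · rw [if_neg (Nat.not_even_iff_odd.mpr ho)] at ih
      rw [if_pos (by simpa [Nat.even_add_one] using Nat.not_even_iff_odd.mpr ho)]
      exact hstepp k ih
end

section
/- Let Ω = R^p and suppose each loss ℓ_z is β-smooth, satisfies the RSI with constant α, and vanishes at a common point w_⋆ (ℓ_z(w_⋆) = 0 for all z, so f_⋆ = 0). Suppose 1/(2β) ≤ η ≤ 2α/β². Consider the ALI-G iterates w_{t+1} = w_t - γ_t ∇ℓ_{z_t}(w_t) with γ_t = min{ℓ_{z_t}(w_t)/‖∇ℓ_{z_t}(w_t)‖², η} (and δ = 0). Then for every realization of the sample sequence, f(w_{T+1}) - f_⋆ ≤ (β/2)·exp((-α/β + ηβ/2)·T)·‖w₀ - w_⋆‖². -/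
open RealInnerProductSpace MeasureTheory

set_option maxHeartbeats 1000000

lemma alig_descent {p : ℕ} (φ : EuclideanSpace ℝ (Fin p) → ℝ)
    (G : EuclideanSpace ℝ (Fin p) → EuclideanSpace ℝ (Fin p)) (β : ℝ)
    (hgrad : ∀ x, HasGradientAt φ (G x) x)
    (hsmooth : ∀ x y, ‖G x - G y‖ ≤ β * ‖x - y‖)
    (u v : EuclideanSpace ℝ (Fin p)) :
    φ v ≤ φ u + ⟪G u, v - u⟫ + β / 2 * ‖v - u‖ ^ 2 := by
  set c := v - u with hc
  set ψ : ℝ → ℝ := fun t => φ (u + t • c) - t * ⟪G u, c⟫ - β / 2 * t ^ 2 * ‖c‖ ^ 2 with hψ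
  have hpath : ∀ t : ℝ, HasDerivAt (fun s : ℝ => u + s • c) c t := by
    intro t
    simpa using (hasDerivAt_id t).smul_const c |>.const_add u
  have hderiv : ∀ t : ℝ, HasDerivAt ψ
      (⟪G (u + t • c), c⟫ - ⟪G u, c⟫ - β * t * ‖c‖ ^ 2) t := by
    intro t
    have h1 : HasDerivAt (fun s : ℝ => φ (u + s • c)) ⟪G (u + t • c), c⟫ t := by
      have := ((hgrad (u + t • c)).hasFDerivAt.comp_hasDerivAt t (hpath t))
      simpa [InnerProductSpace.toDual_apply_apply, Function.comp_def] using this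
    have h2 : HasDerivAt (fun s : ℝ => s * ⟪G u, c⟫) ⟪G u, c⟫ t := by
      simpa using (hasDerivAt_id t).mul_const (⟪G u, c⟫ : ℝ)
    have h3 : HasDerivAt (fun s : ℝ => β / 2 * s ^ 2 * ‖c‖ ^ 2) (β * t * ‖c‖ ^ 2) t := by
      have := ((hasDerivAt_pow 2 t).const_mul (β / 2)).mul_const (‖c‖ ^ 2)
      exact this.congr_deriv (by rw [show (2:ℕ) - 1 = 1 from rfl]; push_cast; ring)
    exact (h1.sub h2).sub h3
  have hanti : AntitoneOn ψ (Set.Icc (0:ℝ) 1) := by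
    apply antitoneOn_of_deriv_nonpos (convex_Icc 0 1)
    · exact fun t _ => ((hderiv t).differentiableAt.continuousAt).continuousWithinAt
    · intro t ht
      exact ((hderiv t).differentiableAt).differentiableWithinAt
    · intro t ht
      rw [interior_Icc] at ht
      rw [(hderiv t).deriv]
      have h1 : ⟪G (u + t • c) - G u, c⟫ ≤ ‖G (u + t • c) - G u‖ * ‖c‖ :=
        real_inner_le_norm _ _
      have h2 : ‖G (u + t • c) - G u‖ ≤ β * (t * ‖c‖) := by
        have := hsmooth (u + t • c) u
        simpa [norm_smul, abs_of_pos ht.1, mul_assoc] using this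
      have h3 : ⟪G (u + t • c), c⟫ - ⟪G u, c⟫ = ⟪G (u + t • c) - G u, c⟫ := by
        rw [inner_sub_left]
      have hcn : (0:ℝ) ≤ ‖c‖ := norm_nonneg _
      nlinarith [norm_nonneg (G (u + t • c) - G u)]
  have h01 : ψ 1 ≤ ψ 0 := hanti (by norm_num) (by norm_num) (by norm_num)
  have e0 : ψ 0 = φ u := by simp [hψ]
  have e1 : ψ 1 = φ v - ⟪G u, c⟫ - β / 2 * ‖c‖ ^ 2 := by
    simp [hψ, hc]
  rw [e0, e1] at h01
  linarith

/-- Deterministic linear convergence of ALI-G (δ = 0) under RSI and β-smoothness,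
with `1/(2β) ≤ η ≤ 2α/β²` and perfect interpolation `ℓ_z(w⋆) = 0`:
`f(w_{T+1}) - f⋆ ≤ (β/2)·exp((-α/β + ηβ/2)·T)·‖w₀ - w⋆‖²`, where `f⋆ = 0`. -/
theorem alig_rsi_convergence
    {p : ℕ} {Z : Type*} [MeasurableSpace Z]
    (μ : Measure Z) [IsProbabilityMeasure μ]
    (ℓ : Z → EuclideanSpace ℝ (Fin p) → ℝ)
    (g : Z → EuclideanSpace ℝ (Fin p) → EuclideanSpace ℝ (Fin p))
    (α β η : ℝ) (hα : 0 < α) (hβ : 0 < β)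
    (hgrad : ∀ z w, HasGradientAt (ℓ z) (g z w) w)
    (hsmooth : ∀ z u v, ‖g z u - g z v‖ ≤ β * ‖u - v‖)
    (hnonneg : ∀ z w, 0 ≤ ℓ z w)
    (wstar : EuclideanSpace ℝ (Fin p))
    (hrsi : ∀ z w, ⟪g z w, w - wstar⟫ ≥ α * ‖w - wstar‖ ^ 2)
    (hinterp : ∀ z, ℓ z wstar = 0)
    (hη₁ : 1 / (2 * β) ≤ η) (hη₂ : η ≤ 2 * α / β ^ 2)
    (f : EuclideanSpace ℝ (Fin p) → ℝ) (hf : ∀ w, f w = ∫ z, ℓ z w ∂μ)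
    (z : ℕ → Z) (w : ℕ → EuclideanSpace ℝ (Fin p))
    (hrec : ∀ t, w (t + 1) =
      w t - (min (ℓ (z t) (w t) / ‖g (z t) (w t)‖ ^ 2) η) • g (z t) (w t))
    (T : ℕ) :
    f (w (T + 1)) - 0 ≤
      (β / 2) * Real.exp ((-α / β + η * β / 2) * T) * ‖w 0 - wstar‖ ^ 2 := by
  obtain ⟨e, he⟩ : ∃ e : ℝ, e = -α / β + η * β / 2 := ⟨_, rfl⟩
  rw [← he]
  have hηpos : 0 < η := lt_of_lt_of_le (by positivity) hη₁
  have hele : e ≤ 0 := by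
    have hηβ : η * β ^ 2 ≤ 2 * α := (le_div_iff₀ (by positivity)).mp hη₂
    have h2 : η * β / 2 ≤ α / β := by
      rw [div_le_div_iff₀ (by norm_num) hβ]; nlinarith
    rw [he, neg_div]; linarith
  -- gradient vanishes at wstar
  have hg0 : ∀ zz, g zz wstar = 0 := by
    intro zz
    have hmin : IsLocalMin (ℓ zz) wstar := by
      apply Filter.Eventually.of_forall
      intro x; rw [hinterp]; exact hnonneg zz x
    have h2 : (InnerProductSpace.toDual ℝ (EuclideanSpace ℝ (Fin p))) (g zz wstar) = 0 :=
      hmin.hasFDerivAt_eq_zero (hgrad zz wstar).hasFDerivAt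
    simpa using (InnerProductSpace.toDual ℝ (EuclideanSpace ℝ (Fin p))).map_eq_zero_iff.mp h2
  -- quadratic growth bound
  have hquad : ∀ zz v, ℓ zz v ≤ β / 2 * ‖v - wstar‖ ^ 2 := by
    intro zz v
    have := alig_descent (ℓ zz) (g zz) β (hgrad zz) (hsmooth zz) wstar v
    simpa [hinterp zz, hg0 zz] using this
  -- gradient norm bound
  have hGsq : ∀ zz u, ‖g zz u‖ ^ 2 ≤ 2 * β * ℓ zz u := by
    intro zz u
    have hd := alig_descent (ℓ zz) (g zz) β (hgrad zz) (hsmooth zz) u (u - (1/β) • g zz u)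
    have hsub : u - (1/β) • g zz u - u = -((1/β) • g zz u) := by abel
    rw [hsub] at hd
    have h1 : ⟪g zz u, -((1/β) • g zz u)⟫ = -(1/β) * ‖g zz u‖ ^ 2 := by
      rw [inner_neg_right, real_inner_smul_right, real_inner_self_eq_norm_sq]
      ring
    have h2 : ‖-((1/β) • g zz u)‖ ^ 2 = (1/β) ^ 2 * ‖g zz u‖ ^ 2 := by
      rw [norm_neg, norm_smul]
      simp [abs_of_pos (by positivity : (0:ℝ) < 1/β), mul_pow]
    rw [h1, h2] at hd
    have h0 := hnonneg zz (u - (1/β) • g zz u)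
    have h2β : (0:ℝ) < 2 * β := by positivity
    have key : 0 ≤ ℓ zz u - 1 / (2 * β) * ‖g zz u‖ ^ 2 := by
      have heq : -(1/β) * ‖g zz u‖ ^ 2 + β / 2 * ((1/β)^2 * ‖g zz u‖ ^ 2)
          = -(1 / (2 * β)) * ‖g zz u‖ ^ 2 := by field_simp; ring
      linarith [hd, h0, heq.le, heq.symm.le]
    have h3 : 2 * β * (1 / (2 * β) * ‖g zz u‖ ^ 2) ≤ 2 * β * ℓ zz u :=
      mul_le_mul_of_nonneg_left (by linarith) h2β.le
    have h4 : 2 * β * (1 / (2 * β) * ‖g zz u‖ ^ 2) = ‖g zz u‖ ^ 2 := by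
      field_simp
    linarith
  -- per-step contraction
  have hstep : ∀ t, ‖w (t+1) - wstar‖ ^ 2 ≤ Real.exp e * ‖w t - wstar‖ ^ 2 := by
    intro t
    obtain ⟨G, hG⟩ : ∃ G, G = g (z t) (w t) := ⟨_, rfl⟩
    obtain ⟨L, hL⟩ : ∃ L : ℝ, L = ℓ (z t) (w t) := ⟨_, rfl⟩
    obtain ⟨γ, hγ⟩ : ∃ γ : ℝ, γ = min (L / ‖G‖ ^ 2) η := ⟨_, rfl⟩
    obtain ⟨D, hD⟩ : ∃ D : ℝ, D = ‖w t - wstar‖ ^ 2 := ⟨_, rfl⟩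
    rw [← hD]
    have hDnn : 0 ≤ D := hD ▸ sq_nonneg _
    by_cases hGz : G = 0
    · have h0 : ‖w t - wstar‖ ^ 2 ≤ 0 := by
        have h := hrsi (z t) (w t)
        rw [← hG, hGz] at h
        simp only [inner_zero_left] at h
        nlinarith [h, hα]
      have hwt : w t = wstar := by
        rw [← sub_eq_zero, ← norm_eq_zero]
        nlinarith [norm_nonneg (w t - wstar), h0]
      have hw1 : w (t+1) = wstar := by
        rw [hrec t, ← hG, hGz, hwt]; simp
      have hL0 : ‖w (t+1) - wstar‖ ^ 2 = 0 := by rw [hw1]; simp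
      rw [hL0]
      exact mul_nonneg (Real.exp_nonneg e) hDnn
    · have hGpos : 0 < ‖G‖ ^ 2 := pow_pos (norm_pos_iff.mpr hGz) 2
      have hγη : γ ≤ η := hγ ▸ min_le_right _ _
      have hLnn : 0 ≤ L := hL ▸ hnonneg _ _
      have hγ0 : 0 ≤ γ := hγ ▸ le_min (div_nonneg hLnn (sq_nonneg _)) hηpos.le
      have hγlb : 1 / (2 * β) ≤ γ := by
        rw [hγ]
        apply le_min _ hη₁
        rw [div_le_div_iff₀ (by positivity) hGpos]
        have h := hGsq (z t) (w t)
        rw [← hG, ← hL] at h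
        linarith
      have hγG : γ * ‖G‖ ^ 2 ≤ L := by
        rw [hγ]
        exact (le_div_iff₀ hGpos).mp (min_le_left _ _)
      have hquad' : L ≤ β / 2 * D := by
        rw [hL, hD]; exact hquad (z t) (w t)
      have hrsi' : α * D ≤ ⟪G, w t - wstar⟫ := by
        rw [hG, hD]; exact hrsi (z t) (w t)
      have hexp : ‖w (t+1) - wstar‖ ^ 2
          = D - 2 * (γ * ⟪G, w t - wstar⟫) + γ ^ 2 * ‖G‖ ^ 2 := by
        rw [hrec t, ← hG, ← hL, ← hγ, sub_right_comm, norm_sub_sq_real,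
          real_inner_smul_right, real_inner_comm, norm_smul, Real.norm_eq_abs,
          mul_pow, sq_abs, ← hD]
      rw [hexp]
      have h1 : γ ^ 2 * ‖G‖ ^ 2 ≤ γ * L := by
        have h := mul_le_mul_of_nonneg_left hγG hγ0
        calc γ ^ 2 * ‖G‖ ^ 2 = γ * (γ * ‖G‖ ^ 2) := by ring
          _ ≤ γ * L := h
      have h2 : γ * L ≤ γ * (β / 2 * D) := mul_le_mul_of_nonneg_left hquad' hγ0
      have h3 : 2 * (γ * (α * D)) ≤ 2 * (γ * ⟪G, w t - wstar⟫) := by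
        have := mul_le_mul_of_nonneg_left hrsi' hγ0
        linarith
      have hfac : D - 2 * (γ * (α * D)) + γ * (β / 2 * D) ≤ (1 + e) * D := by
        have hαγ : α / β ≤ 2 * α * γ := by
          have h := mul_le_mul_of_nonneg_left hγlb (by positivity : (0:ℝ) ≤ 2 * α)
          calc α / β = 2 * α * (1 / (2 * β)) := by field_simp
            _ ≤ 2 * α * γ := h
        have hβγ : γ * (β / 2) ≤ η * β / 2 := by nlinarith
        have hfac1 : 1 - 2 * α * γ + γ * (β / 2) ≤ 1 + e := by
          rw [he, neg_div]; linarith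
        nlinarith [hfac1, hDnn]
      have hexp1 : (1 + e) * D ≤ Real.exp e * D :=
        mul_le_mul_of_nonneg_right (by linarith [Real.add_one_le_exp e]) hDnn
      linarith
  -- geometric decay by induction
  have hiter : ∀ t, ‖w t - wstar‖ ^ 2 ≤ Real.exp e ^ t * ‖w 0 - wstar‖ ^ 2 := by
    intro t
    induction t with
    | zero => simp
    | succ n ih =>
      calc ‖w (n+1) - wstar‖ ^ 2 ≤ Real.exp e * ‖w n - wstar‖ ^ 2 := hstep n
        _ ≤ Real.exp e * (Real.exp e ^ n * ‖w 0 - wstar‖ ^ 2) :=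
            mul_le_mul_of_nonneg_left ih (Real.exp_nonneg e)
        _ = Real.exp e ^ (n+1) * ‖w 0 - wstar‖ ^ 2 := by ring
  -- conclusion
  have hfle : f (w (T+1)) ≤ β / 2 * ‖w (T+1) - wstar‖ ^ 2 := by
    rw [hf]
    calc (∫ zz, ℓ zz (w (T+1)) ∂μ) ≤ ∫ _, β / 2 * ‖w (T+1) - wstar‖ ^ 2 ∂μ := by
          apply integral_mono_of_nonneg
          · exact Filter.Eventually.of_forall fun zz => hnonneg zz _
          · exact integrable_const _
          · exact Filter.Eventually.of_forall fun zz => hquad zz _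
      _ = β / 2 * ‖w (T+1) - wstar‖ ^ 2 := by
          rw [integral_const]; simp
  have hpow : Real.exp e ^ (T+1) ≤ Real.exp (e * T) := by
    rw [mul_comm, Real.exp_nat_mul]
    exact pow_le_pow_of_le_one (Real.exp_nonneg e) (Real.exp_le_one_iff.mpr hele) (by omega)
  have hnn0 : (0:ℝ) ≤ ‖w 0 - wstar‖ ^ 2 := sq_nonneg _
  calc f (w (T+1)) - 0 = f (w (T+1)) := by ring
    _ ≤ β / 2 * ‖w (T+1) - wstar‖ ^ 2 := hfle
    _ ≤ β / 2 * (Real.exp e ^ (T+1) * ‖w 0 - wstar‖ ^ 2) :=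
        mul_le_mul_of_nonneg_left (hiter (T+1)) (by positivity)
    _ ≤ β / 2 * (Real.exp (e * T) * ‖w 0 - wstar‖ ^ 2) :=
        mul_le_mul_of_nonneg_left
          (mul_le_mul_of_nonneg_right hpow hnn0) (by positivity)
    _ = β / 2 * Real.exp (e * T) * ‖w 0 - wstar‖ ^ 2 := by ring
end

section
/- Single-step descent inequality for ALI-G under RSI: let ℓ: R^p → R be β-smooth with ℓ(w_⋆) = min ℓ = 0, satisfying ∇ℓ(w)ᵀ(w - w_⋆) ≥ α‖w - w_⋆‖² for all w. For w_t with ∇ℓ(w_t) ≠ 0 and γ_t = min{ℓ(w_t)/‖∇ℓ(w_t)‖², η}, the update w_{t+1} = w_t - γ_t ∇ℓ(w_t) satisfies ‖w_{t+1} - w_⋆‖² ≤ (1 - 2γ_t α + γ_t β/2)·‖w_t - w_⋆‖². -/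
open RealInnerProductSpace

theorem smooth_upper_bound
    {p : ℕ} (ℓ : EuclideanSpace ℝ (Fin p) → ℝ)
    (g : EuclideanSpace ℝ (Fin p) → EuclideanSpace ℝ (Fin p))
    (β : ℝ) (hβ : 0 < β)
    (hgrad : ∀ w, HasGradientAt ℓ (g w) w)
    (hsmooth : ∀ u v, ‖g u - g v‖ ≤ β * ‖u - v‖)
    (wstar : EuclideanSpace ℝ (Fin p))
    (hmin : ∀ w, 0 ≤ ℓ w) (hws : ℓ wstar = 0)
    (u : EuclideanSpace ℝ (Fin p)) :
    ℓ u ≤ β / 2 * ‖u - wstar‖ ^ 2 := by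
  -- gradient at the minimizer is zero
  have hlm : IsLocalMin ℓ wstar := by
    apply IsMinOn.isLocalMin (by intro w _; simp [hws, hmin w]) Filter.univ_mem
  have hg0 : g wstar = 0 := by
    have := hlm.hasFDerivAt_eq_zero (hasGradientAt_iff_hasFDerivAt.1 (hgrad wstar))
    have h2 : (InnerProductSpace.toDual ℝ _).toLinearEquiv (g wstar) = 0 := this
    simpa using (InnerProductSpace.toDual ℝ (EuclideanSpace ℝ (Fin p))).map_eq_zero_iff.1 this
  set d := u - wstar with hd
  set ψ : ℝ → ℝ := fun t => ℓ (wstar + t • d) - β / 2 * t ^ 2 * ‖d‖ ^ 2 with hψdef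
  have hψ : ∀ t : ℝ, HasDerivAt ψ (⟪g (wstar + t • d), d⟫ - β * t * ‖d‖ ^ 2) t := by
    intro t
    have hline : HasDerivAt (fun t : ℝ => wstar + t • d) d t := by
      simpa using ((hasDerivAt_id t).smul_const d).const_add wstar
    have h1 : HasDerivAt (fun t : ℝ => ℓ (wstar + t • d)) (⟪g (wstar + t • d), d⟫) t := by
      have := (hasGradientAt_iff_hasFDerivAt.1 (hgrad (wstar + t • d))).comp_hasDerivAt t hline
      simpa [InnerProductSpace.toDual_apply_apply, Function.comp_def] using this
    have h2 : HasDerivAt (fun t : ℝ => β / 2 * t ^ 2 * ‖d‖ ^ 2) (β * t * ‖d‖ ^ 2) t := by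
      have := ((hasDerivAt_pow 2 t).const_mul (β / 2)).mul_const (‖d‖ ^ 2)
      refine this.congr_deriv ?_
      ring
    exact h1.sub h2
  have hanti : AntitoneOn ψ (Set.Icc 0 1) := by
    apply antitoneOn_of_deriv_nonpos (convex_Icc 0 1)
    · exact fun s _ => ((hψ s).continuousAt).continuousWithinAt
    · intro t ht
      exact ((hψ t).differentiableAt).differentiableWithinAt
    · intro t ht
      rw [interior_Icc] at ht
      rw [(hψ t).deriv]
      have hnorm : ‖g (wstar + t • d)‖ ≤ β * (t * ‖d‖) := by
        have := hsmooth (wstar + t • d) wstar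
        simpa [hg0, norm_smul, abs_of_pos ht.1] using this
      have hinner : ⟪g (wstar + t • d), d⟫ ≤ β * t * ‖d‖ ^ 2 := by
        calc ⟪g (wstar + t • d), d⟫ ≤ ‖g (wstar + t • d)‖ * ‖d‖ := real_inner_le_norm _ _
        _ ≤ β * (t * ‖d‖) * ‖d‖ := by
            apply mul_le_mul_of_nonneg_right hnorm (norm_nonneg _)
        _ = β * t * ‖d‖ ^ 2 := by ring
      linarith
  have h01 : ψ 1 ≤ ψ 0 := hanti (by simp) (by simp) (by norm_num)
  have hψ0 : ψ 0 = 0 := by simp [hψdef, hws]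
  have hψ1 : ψ 1 = ℓ u - β / 2 * ‖d‖ ^ 2 := by simp [hψdef, hd]
  rw [hψ0, hψ1] at h01
  linarith

/-- Single-step descent inequality for ALI-G under the RSI:
`‖w_{t+1} - w⋆‖² ≤ (1 - 2γ_t α + γ_t β/2)·‖w_t - w⋆‖²`. -/
theorem alig_single_step_rsi
    {p : ℕ} (ℓ : EuclideanSpace ℝ (Fin p) → ℝ)
    (g : EuclideanSpace ℝ (Fin p) → EuclideanSpace ℝ (Fin p))
    (α β η : ℝ) (hα : 0 < α) (hβ : 0 < β) (hη : 0 < η)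
    (hgrad : ∀ w, HasGradientAt ℓ (g w) w)
    (hsmooth : ∀ u v, ‖g u - g v‖ ≤ β * ‖u - v‖)
    (wstar : EuclideanSpace ℝ (Fin p))
    (hmin : ∀ w, 0 ≤ ℓ w) (hws : ℓ wstar = 0)
    (hrsi : ∀ w, ⟪g w, w - wstar⟫ ≥ α * ‖w - wstar‖ ^ 2)
    (wt : EuclideanSpace ℝ (Fin p)) (hgt : g wt ≠ 0) :
    let γ := min (ℓ wt / ‖g wt‖ ^ 2) η
    let wnext := wt - γ • g wt
    ‖wnext - wstar‖ ^ 2 ≤ (1 - 2 * γ * α + γ * β / 2) * ‖wt - wstar‖ ^ 2 := by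
  intro γ wnext
  have hgpos : 0 < ‖g wt‖ ^ 2 := by have := norm_pos_iff.2 hgt; positivity
  have hγ0 : 0 ≤ γ := le_min (div_nonneg (hmin wt) (le_of_lt hgpos)) hη.le
  have hγle : γ * ‖g wt‖ ^ 2 ≤ ℓ wt := by
    have := min_le_left (ℓ wt / ‖g wt‖ ^ 2) η
    calc γ * ‖g wt‖ ^ 2 ≤ (ℓ wt / ‖g wt‖ ^ 2) * ‖g wt‖ ^ 2 :=
          mul_le_mul_of_nonneg_right this hgpos.le
      _ = ℓ wt := div_mul_cancel₀ _ (ne_of_gt hgpos)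
  have hub : ℓ wt ≤ β / 2 * ‖wt - wstar‖ ^ 2 :=
    smooth_upper_bound ℓ g β hβ hgrad hsmooth wstar hmin hws wt
  have hexp : ‖wnext - wstar‖ ^ 2 =
      ‖wt - wstar‖ ^ 2 - 2 * γ * ⟪g wt, wt - wstar⟫ + γ ^ 2 * ‖g wt‖ ^ 2 := by
    have : wnext - wstar = (wt - wstar) - γ • g wt := by
      simp [wnext]; abel
    rw [this, norm_sub_sq_real]
    rw [real_inner_smul_right, real_inner_comm, norm_smul]
    simp [mul_pow]
    ring
  have hrsi' := hrsi wt
  have hsq : γ ^ 2 * ‖g wt‖ ^ 2 ≤ γ * (β / 2 * ‖wt - wstar‖ ^ 2) := by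
    calc γ ^ 2 * ‖g wt‖ ^ 2 = γ * (γ * ‖g wt‖ ^ 2) := by ring
      _ ≤ γ * ℓ wt := mul_le_mul_of_nonneg_left hγle hγ0
      _ ≤ γ * (β / 2 * ‖wt - wstar‖ ^ 2) := mul_le_mul_of_nonneg_left hub hγ0
  nlinarith [mul_le_mul_of_nonneg_left hrsi' (mul_nonneg (by norm_num : (0:ℝ) ≤ 2) hγ0)]
end

section
/- Basic iterate bound for ALI-G in the convex setting: let Ω ⊆ R^p be convex, ℓ: R^p → R convex and differentiable with ℓ ≥ 0, δ ≥ 0, η > 0, w_t ∈ Ω, w_⋆ ∈ Ω, γ_t = min{ℓ(w_t)/(‖∇ℓ(w_t)‖² + δ), η}, and w_{t+1} = Π_Ω(w_t - γ_t ∇ℓ(w_t)) where Π_Ω is Euclidean projection onto Ω. Then ‖w_{t+1} - w_⋆‖² ≤ ‖w_t - w_⋆‖² - γ_t(ℓ(w_t) - ℓ(w_⋆)) + γ_t ℓ(w_⋆). -/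
open RealInnerProductSpace

private lemma proj_sq_le {p : ℕ} {u v w : EuclideanSpace ℝ (Fin p)}
    (h : ⟪u - v, w - v⟫ ≤ 0) : ‖v - w‖ ^ 2 ≤ ‖u - w‖ ^ 2 := by
  have hexp : ‖u - w‖ ^ 2 = ‖u - v‖ ^ 2 + 2 * ⟪u - v, v - w⟫ + ‖v - w‖ ^ 2 := by
    have := norm_add_sq_real (u - v) (v - w)
    simpa [sub_add_sub_cancel] using this
  have h2 : ⟪u - v, v - w⟫ = -⟪u - v, w - v⟫ := by
    rw [← inner_neg_right]; congr 1; abel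
  nlinarith [sq_nonneg ‖u - v‖]

/-- Gradient inequality for convex functions. -/
private lemma grad_ineq {p : ℕ} (ℓ : EuclideanSpace ℝ (Fin p) → ℝ)
    (hconv : ConvexOn ℝ Set.univ ℓ)
    {g x y : EuclideanSpace ℝ (Fin p)} (hg : HasGradientAt ℓ g x) :
    ℓ x + ⟪g, y - x⟫ ≤ ℓ y := by
  rcases eq_or_ne y x with rfl | hne
  · simp
  set φ : ℝ → ℝ := fun t => ℓ (x + t • (y - x)) with hφ
  have hφconv : ConvexOn ℝ Set.univ φ := by
    have := hconv.comp_affineMap (AffineMap.lineMap x y : ℝ →ᵃ[ℝ] EuclideanSpace ℝ (Fin p))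
    have heq : φ = ℓ ∘ (AffineMap.lineMap x y : ℝ →ᵃ[ℝ] EuclideanSpace ℝ (Fin p)) := by
      funext t
      simp [Function.comp, AffineMap.lineMap_apply, φ, vsub_eq_sub, vadd_eq_add]
      congr 1
      abel
    rw [heq]
    simpa using this
  have hline : HasDerivAt (fun t : ℝ => x + t • (y - x)) (y - x) 0 := by
    simpa using ((hasDerivAt_id (0 : ℝ)).smul_const (y - x)).const_add x
  have hd : HasDerivAt φ ⟪g, y - x⟫ 0 := by
    have hF : HasFDerivAt ℓ (InnerProductSpace.toDual ℝ _ g) x := hg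
    have hF' : HasFDerivAt ℓ (InnerProductSpace.toDual ℝ _ g) (x + (0:ℝ) • (y - x)) := by
      simpa using hF
    have := hF'.comp_hasDerivAt 0 hline
    simp only [InnerProductSpace.toDual_apply_apply] at this
    exact this
  have hslope := hφconv.le_slope_of_hasDerivAt (Set.mem_univ (0 : ℝ))
    (Set.mem_univ (1 : ℝ)) one_pos hd
  have : slope φ 0 1 = ℓ y - ℓ x := by
    simp [slope_def_field, φ]
  linarith [hslope.trans_eq this]

/-- Basic iterate bound for one projected ALI-G step in the convex setting:
`‖w_{t+1} - w⋆‖² ≤ ‖w_t - w⋆‖² - γ_t(ℓ(w_t) - ℓ(w⋆)) + γ_t ℓ(w⋆)`. -/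
theorem alig_basic_iterate_bound
    {p : ℕ} (ℓ : EuclideanSpace ℝ (Fin p) → ℝ)
    (g : EuclideanSpace ℝ (Fin p) → EuclideanSpace ℝ (Fin p))
    (δ η : ℝ) (hδ : 0 ≤ δ) (hη : 0 < η)
    (hconv : ConvexOn ℝ Set.univ ℓ)
    (hgrad : ∀ w, HasGradientAt ℓ (g w) w)
    (hnonneg : ∀ w, 0 ≤ ℓ w)
    (K : Set (EuclideanSpace ℝ (Fin p))) (hK : Convex ℝ K)
    (proj : EuclideanSpace ℝ (Fin p) → EuclideanSpace ℝ (Fin p))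
    (hproj : ∀ x, proj x ∈ K ∧ ∀ y ∈ K, ‖x - proj x‖ ≤ ‖x - y‖)
    (wt wstar : EuclideanSpace ℝ (Fin p)) (hwt : wt ∈ K) (hws : wstar ∈ K) :
    let γ := min (ℓ wt / (‖g wt‖ ^ 2 + δ)) η
    let wnext := proj (wt - γ • g wt)
    ‖wnext - wstar‖ ^ 2 ≤
      ‖wt - wstar‖ ^ 2 - γ * (ℓ wt - ℓ wstar) + γ * ℓ wstar := by
  intro γ wnext
  set x := wt - γ • g wt with hx
  -- γ is nonnegative
  have hγ0 : 0 ≤ γ := le_min (div_nonneg (hnonneg wt) (by positivity)) hη.le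
  -- γ * ‖g wt‖² ≤ ℓ wt
  have hγg : γ * ‖g wt‖ ^ 2 ≤ ℓ wt := by
    rcases le_or_gt (‖g wt‖ ^ 2 + δ) 0 with hle | hpos
    · have h0 : ‖g wt‖ ^ 2 = 0 := le_antisymm (by nlinarith [sq_nonneg ‖g wt‖]) (sq_nonneg _)
      rw [h0, mul_zero]; exact hnonneg wt
    · have h1 : γ ≤ ℓ wt / (‖g wt‖ ^ 2 + δ) := min_le_left _ _
      have h2 : γ * (‖g wt‖ ^ 2 + δ) ≤ ℓ wt := by
        rw [← div_mul_cancel₀ (ℓ wt) hpos.ne']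
        exact mul_le_mul_of_nonneg_right h1 hpos.le
      nlinarith
  -- projection step: ‖wnext - wstar‖ ≤ ‖x - wstar‖
  haveI : Nonempty K := ⟨⟨wt, hwt⟩⟩
  have hinf : ‖x - proj x‖ = ⨅ w : K, ‖x - w‖ := by
    refine le_antisymm (le_ciInf fun w => (hproj x).2 w w.2) ?_
    exact ciInf_le ⟨0, fun r ⟨w, hw⟩ => hw ▸ norm_nonneg _⟩ (⟨proj x, (hproj x).1⟩ : K)
  have hvar : ⟪x - proj x, wstar - proj x⟫ ≤ 0 :=
    (norm_eq_iInf_iff_real_inner_le_zero hK (hproj x).1).mp hinf wstar hws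
  have hstep : ‖wnext - wstar‖ ^ 2 ≤ ‖x - wstar‖ ^ 2 := proj_sq_le hvar
  -- expand ‖x - wstar‖²
  have hexp : ‖x - wstar‖ ^ 2
      = ‖wt - wstar‖ ^ 2 - 2 * γ * ⟪g wt, wt - wstar⟫ + γ ^ 2 * ‖g wt‖ ^ 2 := by
    have h1 : x - wstar = (wt - wstar) - γ • g wt := by rw [hx]; abel
    rw [h1, norm_sub_sq_real, real_inner_smul_right, norm_smul, real_inner_comm]
    simp [abs_of_nonneg hγ0, mul_pow]
    ring
  -- convexity inequality
  have hgi := grad_ineq ℓ hconv (hgrad wt) (y := wstar)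
  have hinner : ℓ wt - ℓ wstar ≤ ⟪g wt, wt - wstar⟫ := by
    have : ⟪g wt, wstar - wt⟫ = -⟪g wt, wt - wstar⟫ := by
      rw [← inner_neg_right]; congr 1; abel
    linarith [hgi, this.le, this.ge]
  nlinarith [hstep, hexp, hγ0, hγg, hinner,
    mul_le_mul_of_nonneg_left hinner hγ0]
end
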